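/- Fix integers d ≥ 1 and n ≥ 1. For g > 0 and ρ ∈ ℝ define the weight of Y ∈ W_n as Q_{g,ρ,n}(Y) = (∏_{x∈range(Y)} F_{g,ρ}(n_x(Y))) / (Σ_{Y'∈W_n} ∏_{x∈range(Y')} F_{g,ρ}(n_x(Y'))). Suppose ρ = ρ(g) is chosen so that α(g,ρ(g)) = (ρ(g)−1)/(2√g) → 0 as g → ∞. Then for every Y ∈ W_n, lim_{g→∞} Q_{g,ρ(g),n}(Y) = (∏_{x∈range(Y)} Γ(n_x(Y)/2)/(2Γ(n_x(Y)))) / (Σ_{Y'∈W_n} ∏_{x∈range(Y')} Γ(n_x(Y')/2)/(2Γ(n_x(Y')))), where Γ is the Gamma function. -/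

import Mathlib

/-!
Formalization of statements from "The strong interaction limit of
continuous-time weakly self-avoiding walk" by Brydges, Dahlqvist, Slade.

An `n`-step nearest-neighbour walk on `ℤ^d` starting at the origin is encoded
bijectively by its sequence of steps `s : Fin n → Fin d × Bool`, a step being a
coordinate direction together with a sign.
-/

open scoped BigOperators Topology
open Filter

namespace StrongInteraction

/-- The unit step in coordinate direction `e.1`, with sign `e.2`. -/
def stepVec (d : ℕ) (e : Fin d × Bool) : Fin d → ℤ :=
  fun i => if i = e.1 then (if e.2 then 1 else -1) else 0

/-- `walkPos s k` is the position `Y_k` of the walk started at the origin whose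
successive nearest-neighbour steps are given by `s`. -/
def walkPos {d n : ℕ} (s : Fin n → Fin d × Bool) (k : Fin (n + 1)) : Fin d → ℤ :=
  ∑ i ∈ Finset.univ.filter (fun i : Fin n => (i : ℕ) < (k : ℕ)), stepVec d (s i)

/-- `n_x(Y)`: the number of visits to `x` by the walk. -/
def visits {d n : ℕ} (s : Fin n → Fin d × Bool) (x : Fin d → ℤ) : ℕ :=
  (Finset.univ.filter (fun k : Fin (n + 1) => walkPos s k = x)).card

/-- The set of distinct vertices visited by the walk. -/
def walkRange {d n : ℕ} (s : Fin n → Fin d × Bool) : Finset (Fin d → ℤ) :=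
  Finset.image (walkPos s) Finset.univ

/-- A walk is self-avoiding when its positions are pairwise distinct. -/
def SelfAvoiding {d n : ℕ} (s : Fin n → Fin d × Bool) : Prop :=
  Function.Injective (walkPos s)

instance {d n : ℕ} (s : Fin n → Fin d × Bool) : Decidable (SelfAvoiding s) :=
  inferInstanceAs (Decidable (Function.Injective (walkPos s)))

/-- `c_n`: the number of `n`-step self-avoiding walks. -/
def csaw (d n : ℕ) : ℕ :=
  (Finset.univ.filter fun s : Fin n → Fin d × Bool => SelfAvoiding s).card


/-- `F_{g,ρ}(m) = ∫_0^∞ (s^{m-1}/(m-1)!) e^{-s - g s² + ρ s} ds`, the contribution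
of a vertex visited `m` times, obtained from the Gamma(m,1) density of the sum of
`m` independent Exp(1) holding times. -/
noncomputable def F (g ρ : ℝ) (m : ℕ) : ℝ :=
  ∫ t in Set.Ioi (0 : ℝ),
    (t ^ (m - 1) / (Nat.factorial (m - 1))) * Real.exp (-t - g * t ^ 2 + ρ * t)

/-- The quick-step probability weight `Q_{g,ρ,n}(Y)` of a walk. -/
noncomputable def Qweight (d n : ℕ) (g ρ : ℝ) (s : Fin n → Fin d × Bool) : ℝ :=
  (∏ x ∈ walkRange s, F g ρ (visits s x)) /
    ∑ s' : Fin n → Fin d × Bool, ∏ x ∈ walkRange s', F g ρ (visits s' x)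

/-- The rescaled vertex weight `I_m(a/2) = ∫_0^∞ u^{m-1}/(m-1)! e^{-u² + a u} du`. -/
noncomputable def G (m : ℕ) (a : ℝ) : ℝ :=
  ∫ u in Set.Ioi (0 : ℝ),
    (u ^ (m - 1) / (Nat.factorial (m - 1))) * Real.exp (-u ^ 2 + a * u)

lemma F_eq (g ρ : ℝ) (hg : 0 < g) (m : ℕ) (hm : 1 ≤ m) :
    F g ρ m = (Real.sqrt g)⁻¹ ^ m * G m ((ρ - 1) * (Real.sqrt g)⁻¹) := by
  have hs : 0 < Real.sqrt g := Real.sqrt_pos.mpr hg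
  have hc : 0 < (Real.sqrt g)⁻¹ := inv_pos.mpr hs
  set c := (Real.sqrt g)⁻¹ with hcdef
  have hgc : g * c ^ 2 = 1 := by
    rw [hcdef, inv_pow, Real.sq_sqrt hg.le, mul_inv_cancel₀ hg.ne']
  have key := MeasureTheory.integral_comp_mul_left_Ioi
      (fun t => (t ^ (m - 1) / (Nat.factorial (m - 1))) * Real.exp (-t - g * t ^ 2 + ρ * t))
      0 hc
  simp only [mul_zero, smul_eq_mul] at key
  have heq : ∀ x : ℝ,
      (c * x) ^ (m - 1) / (Nat.factorial (m - 1)) *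
          Real.exp (-(c * x) - g * (c * x) ^ 2 + ρ * (c * x))
        = c ^ (m - 1) *
            (x ^ (m - 1) / (Nat.factorial (m - 1)) * Real.exp (-x ^ 2 + (ρ - 1) * c * x)) := by
    intro x
    have h1 : g * (c * x) ^ 2 = x ^ 2 := by
      rw [mul_pow]; linear_combination x ^ 2 * hgc
    rw [mul_pow,
      show -(c * x) - g * (c * x) ^ 2 + ρ * (c * x) = -x ^ 2 + (ρ - 1) * c * x by
        rw [h1]; ring]
    ring
  have h2 : c * (∫ x in Set.Ioi (0:ℝ), (c * x) ^ (m - 1) / (Nat.factorial (m - 1)) *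
      Real.exp (-(c * x) - g * (c * x) ^ 2 + ρ * (c * x))) = F g ρ m := by
    rw [key, ← mul_assoc, mul_inv_cancel₀ hc.ne', one_mul, F]
  rw [← h2]
  simp only [heq]
  rw [MeasureTheory.integral_const_mul, G, ← mul_assoc,
    show c ^ m = c * c ^ (m - 1) from by rw [← pow_succ']; congr 1; omega]

lemma G_continuousAt (m : ℕ) : ContinuousAt (G m) 0 := by
  have hint : MeasureTheory.Integrable
      (fun u : ℝ => Real.exp (1 / 2) / (Nat.factorial (m - 1)) *
        (u ^ (((m - 1 : ℕ) : ℝ)) * Real.exp (-(1 / 2) * u ^ 2)))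
      (MeasureTheory.volume.restrict (Set.Ioi (0 : ℝ))) :=
    ((integrable_rpow_mul_exp_neg_mul_sq (by norm_num : (0:ℝ) < 1/2)
      (lt_of_lt_of_le (by norm_num) (Nat.cast_nonneg _))).restrict).const_mul _
  refine MeasureTheory.continuousAt_of_dominated ?_ ?_ hint ?_
  · refine Eventually.of_forall fun a => ?_
    exact ((by fun_prop : Continuous fun u : ℝ =>
      u ^ (m - 1) / (Nat.factorial (m - 1)) * Real.exp (-u ^ 2 + a * u))).aestronglyMeasurable
  · filter_upwards [Ioo_mem_nhds (by norm_num : (-1:ℝ) < 0) (by norm_num : (0:ℝ) < 1)] with a ha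
    refine (MeasureTheory.ae_restrict_iff' measurableSet_Ioi).2 (Filter.Eventually.of_forall
      fun u hu => ?_)
    have hu0 : (0:ℝ) < u := hu
    have hfac : (0:ℝ) < (Nat.factorial (m - 1) : ℝ) := by positivity
    rw [Real.norm_eq_abs, abs_of_nonneg (by positivity)]
    rw [Real.rpow_natCast]
    have h1 : a * u ≤ u := by nlinarith [ha.2.le]
    have h2 : -u ^ 2 + a * u ≤ 1 / 2 + -(1 / 2) * u ^ 2 := by
      nlinarith [sq_nonneg (u - 1)]
    calc u ^ (m - 1) / (Nat.factorial (m - 1)) * Real.exp (-u ^ 2 + a * u)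
        ≤ u ^ (m - 1) / (Nat.factorial (m - 1)) * Real.exp (1 / 2 + -(1 / 2) * u ^ 2) := by
          gcongr
      _ = Real.exp (1 / 2) / (Nat.factorial (m - 1)) *
            (u ^ (m - 1) * Real.exp (-(1 / 2) * u ^ 2)) := by
          rw [Real.exp_add]; ring
  · refine Filter.Eventually.of_forall fun u => ?_
    exact ((by fun_prop : Continuous fun a : ℝ =>
      u ^ (m - 1) / (Nat.factorial (m - 1)) * Real.exp (-u ^ 2 + a * u))).continuousAt

lemma G_zero (m : ℕ) (hm : 1 ≤ m) :
    G m 0 = Real.Gamma ((m : ℝ) / 2) / (2 * Real.Gamma m) := by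
  have hcast : ((m - 1 : ℕ) : ℝ) = (m : ℝ) - 1 := by
    push_cast [Nat.cast_sub hm]; ring
  have hGam : Real.Gamma (m : ℝ) = (Nat.factorial (m - 1) : ℝ) := by
    rw [show ((m : ℝ)) = ((m - 1 : ℕ) : ℝ) + 1 by rw [hcast]; ring]
    exact Real.Gamma_nat_eq_factorial (m - 1)
  have h1 : ∀ u ∈ Set.Ioi (0:ℝ),
      u ^ (m - 1) / (Nat.factorial (m - 1)) * Real.exp (-u ^ 2 + 0 * u)
        = (1 / (Nat.factorial (m - 1) : ℝ)) *
            (u ^ (((m - 1 : ℕ) : ℝ)) * Real.exp (-u ^ ((2:ℕ) : ℝ))) := by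
    intro u hu
    have hu0 : (0:ℝ) < u := hu
    rw [Real.rpow_natCast, Real.rpow_natCast]
    ring_nf
  rw [G, MeasureTheory.setIntegral_congr_fun measurableSet_Ioi h1,
    MeasureTheory.integral_const_mul]
  rw [show (((2:ℕ)) : ℝ) = (2 : ℝ) by norm_num]
  rw [integral_rpow_mul_exp_neg_rpow (by norm_num : (0:ℝ) < 2)
    (lt_of_lt_of_le (by norm_num) (Nat.cast_nonneg _))]
  rw [hcast, hGam]
  have hfac : (0:ℝ) < (Nat.factorial (m - 1) : ℝ) := by positivity
  rw [show ((m:ℝ) - 1 + 1) / 2 = (m : ℝ) / 2 by ring]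
  field_simp

lemma G_zero_pos (m : ℕ) (hm : 1 ≤ m) : 0 < G m 0 := by
  rw [G_zero m hm]
  have hm' : (0:ℝ) < (m:ℝ) := by exact_mod_cast hm
  have h1 := Real.Gamma_pos_of_pos (by linarith : (0:ℝ) < (m:ℝ)/2)
  have h2 := Real.Gamma_pos_of_pos hm'
  exact div_pos h1 (by linarith)

lemma visits_pos {d n : ℕ} (s : Fin n → Fin d × Bool) {x : Fin d → ℤ}
    (hx : x ∈ walkRange s) : 1 ≤ visits s x := by
  rw [walkRange, Finset.mem_image] at hx
  obtain ⟨k, -, hk⟩ := hx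
  exact Finset.card_pos.mpr ⟨k, by simp [hk]⟩

lemma sum_visits {d n : ℕ} (s : Fin n → Fin d × Bool) :
    ∑ x ∈ walkRange s, visits s x = n + 1 := by
  have h := Finset.card_eq_sum_card_image (walkPos s) (Finset.univ : Finset (Fin (n+1)))
  simp only [Finset.card_univ, Fintype.card_fin] at h
  exact h.symm

/-- if `α(g,ρ(g)) = (ρ(g)-1)/(2√g) → 0` as `g → ∞`, the
quick-step weights converge to the self-repelling measure with vertex weights
`Γ(n_x/2)/(2Γ(n_x))`. -/
theorem quickstep_limit_a_zero (d n : ℕ) (hd : 1 ≤ d) (hn : 1 ≤ n)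
    (ρ : ℝ → ℝ)
    (hα : Tendsto (fun g : ℝ => (ρ g - 1) / (2 * Real.sqrt g)) atTop (𝓝 0))
    (s : Fin n → Fin d × Bool) :
    Tendsto (fun g : ℝ => Qweight d n g (ρ g) s) atTop
      (𝓝 ((∏ x ∈ walkRange s,
            Real.Gamma ((visits s x : ℝ) / 2) / (2 * Real.Gamma (visits s x))) /
        ∑ s' : Fin n → Fin d × Bool,
          ∏ x ∈ walkRange s',
            Real.Gamma ((visits s' x : ℝ) / 2) / (2 * Real.Gamma (visits s' x)))) := by
  haveI hne : Nonempty (Fin n → Fin d × Bool) := ⟨fun _ => (⟨0, hd⟩, true)⟩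
  set a : ℝ → ℝ := fun g => (ρ g - 1) * (Real.sqrt g)⁻¹ with ha_def
  have ha : Tendsto a atTop (𝓝 0) := by
    have h2 := hα.const_mul (2 : ℝ)
    rw [mul_zero] at h2
    refine h2.congr fun g => ?_
    simp only [ha_def]
    by_cases hs : Real.sqrt g = 0
    · simp [hs]
    · field_simp
  have hGlim : ∀ m : ℕ, Tendsto (fun g => G m (a g)) atTop (𝓝 (G m 0)) :=
    fun m => ((G_continuousAt m).tendsto).comp ha
  have hnum : Tendsto (fun g => ∏ x ∈ walkRange s, G (visits s x) (a g)) atTop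
      (𝓝 (∏ x ∈ walkRange s, G (visits s x) 0)) :=
    tendsto_finset_prod _ fun x _ => hGlim _
  have hden : Tendsto
      (fun g => ∑ s' : Fin n → Fin d × Bool, ∏ x ∈ walkRange s', G (visits s' x) (a g)) atTop
      (𝓝 (∑ s' : Fin n → Fin d × Bool, ∏ x ∈ walkRange s', G (visits s' x) 0)) :=
    tendsto_finset_sum _ fun s' _ => tendsto_finset_prod _ fun x _ => hGlim _
  have hDpos : 0 < ∑ s' : Fin n → Fin d × Bool, ∏ x ∈ walkRange s', G (visits s' x) 0 := by
    refine Finset.sum_pos (fun s' _ => Finset.prod_pos fun x hx =>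
      G_zero_pos _ (visits_pos s' hx)) Finset.univ_nonempty
  have hlim := hnum.div hden hDpos.ne'
  have hev : (fun g : ℝ => Qweight d n g (ρ g) s) =ᶠ[atTop]
      fun g => (∏ x ∈ walkRange s, G (visits s x) (a g)) /
        ∑ s' : Fin n → Fin d × Bool, ∏ x ∈ walkRange s', G (visits s' x) (a g) := by
    filter_upwards [eventually_gt_atTop (0 : ℝ)] with g hg
    have hc : (0:ℝ) < (Real.sqrt g)⁻¹ := inv_pos.mpr (Real.sqrt_pos.mpr hg)
    have key : ∀ s' : Fin n → Fin d × Bool,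
        ∏ x ∈ walkRange s', F g (ρ g) (visits s' x)
          = (Real.sqrt g)⁻¹ ^ (n + 1) * ∏ x ∈ walkRange s', G (visits s' x) (a g) := by
      intro s'
      calc ∏ x ∈ walkRange s', F g (ρ g) (visits s' x)
          = ∏ x ∈ walkRange s',
              ((Real.sqrt g)⁻¹ ^ (visits s' x) * G (visits s' x) (a g)) :=
            Finset.prod_congr rfl fun x hx => F_eq g (ρ g) hg _ (visits_pos s' hx)
        _ = (∏ x ∈ walkRange s', (Real.sqrt g)⁻¹ ^ (visits s' x)) *
              ∏ x ∈ walkRange s', G (visits s' x) (a g) := Finset.prod_mul_distrib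
        _ = (Real.sqrt g)⁻¹ ^ (n + 1) * ∏ x ∈ walkRange s', G (visits s' x) (a g) := by
            rw [Finset.prod_pow_eq_pow_sum, sum_visits]
    rw [Qweight]
    simp only [key]
    rw [← Finset.mul_sum, mul_div_mul_left _ _ (by positivity)]
  have hval : (∏ x ∈ walkRange s, G (visits s x) 0) /
      (∑ s' : Fin n → Fin d × Bool, ∏ x ∈ walkRange s', G (visits s' x) 0)
      = (∏ x ∈ walkRange s,
          Real.Gamma ((visits s x : ℝ) / 2) / (2 * Real.Gamma (visits s x))) /
        ∑ s' : Fin n → Fin d × Bool,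
          ∏ x ∈ walkRange s',
            Real.Gamma ((visits s' x : ℝ) / 2) / (2 * Real.Gamma (visits s' x)) := by
    congr 1
    · exact Finset.prod_congr rfl fun x hx => G_zero _ (visits_pos s hx)
    · exact Finset.sum_congr rfl fun s' _ =>
        Finset.prod_congr rfl fun x hx => G_zero _ (visits_pos s' hx)
  rw [← hval]
  exact hlim.congr' hev.symm

end StrongInteraction
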